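/- Under the hypotheses of the whitening perturbation lemma (ε̃ := ||Â − A||_op/σ_k(A) < 1/3, Ŵ whitens Â, W = Ŵ U D^{−1/2} U^T whitens A), the whitening matrices satisfy ||Ŵ − W||_op ≤ ||W||_op · ε̃/(1 − ε̃). -/

import Mathlib

open Matrix

/-- The ℓ²→ℓ² operator norm (spectral norm) of a real rectangular matrix. -/
noncomputable def opNorm {m n : ℕ} (A : Matrix (Fin m) (Fin n) ℝ) : ℝ :=
  ‖LinearMap.toContinuousLinearMap
      (Matrix.toLin (EuclideanSpace.basisFun (Fin n) ℝ).toBasis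
        (EuclideanSpace.basisFun (Fin m) ℝ).toBasis A)‖

/-- Eigenvalues of a real matrix (junk value `0` if not symmetric). -/
noncomputable def eigVals {d : ℕ} (A : Matrix (Fin d) (Fin d) ℝ) : Fin d → ℝ :=
  if h : A.IsHermitian then h.eigenvalues else 0

/-- `sval A j` is the `(j+1)`-th largest eigenvalue of the symmetric matrix `A`;
for a positive semidefinite matrix this is the `(j+1)`-th largest singular value. -/
noncomputable def sval {d : ℕ} (A : Matrix (Fin d) (Fin d) ℝ) (j : Fin d) : ℝ :=
  (eigVals A ∘ Tuple.sort (eigVals A)) j.rev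

open scoped Matrix.Norms.L2Operator

namespace WhiteningAux

lemma opNorm_eq_l2 {m n : ℕ} (A : Matrix (Fin m) (Fin n) ℝ) : opNorm A = ‖A‖ := rfl

lemma normT {m n : ℕ} (A : Matrix (Fin m) (Fin n) ℝ) : ‖Aᵀ‖ = ‖A‖ := by
  rw [← Matrix.l2_opNorm_conjTranspose A]; congr 1

lemma norm_one_matrix {n : ℕ} [Nonempty (Fin n)] : ‖(1 : Matrix (Fin n) (Fin n) ℝ)‖ = 1 := by
  rw [Matrix.cstar_norm_def, _root_.map_one]; exact ContinuousLinearMap.norm_id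

lemma norm_le_one_of_orthogonal {n : ℕ} [Nonempty (Fin n)] (U : Matrix (Fin n) (Fin n) ℝ)
    (hU : Uᵀ * U = 1) : ‖U‖ ≤ 1 := by
  have h : ‖U‖ * ‖U‖ = 1 := by
    have := Matrix.l2_opNorm_conjTranspose_mul_self U
    have hcT : Uᴴ = Uᵀ := rfl
    rw [hcT, hU, norm_one_matrix] at this
    linarith
  nlinarith [norm_nonneg U]

lemma normT_le_one_of_orthogonal {n : ℕ} [Nonempty (Fin n)]
    (U : Matrix (Fin n) (Fin n) ℝ) (hU : Uᵀ * U = 1) : ‖Uᵀ‖ ≤ 1 := by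
  rw [normT]; exact norm_le_one_of_orthogonal U hU

lemma quadform_abs_le {n : ℕ} (M : Matrix (Fin n) (Fin n) ℝ) (x y : EuclideanSpace ℝ (Fin n)) :
    |(inner ℝ x (Matrix.toEuclideanLin M y) : ℝ)| ≤ ‖M‖ * ‖x‖ * ‖y‖ := by
  calc |(inner ℝ x (Matrix.toEuclideanLin M y) : ℝ)| ≤ ‖x‖ * ‖Matrix.toEuclideanLin M y‖ :=
        abs_real_inner_le_norm _ _
    _ ≤ ‖x‖ * (‖M‖ * ‖y‖) := by
        refine mul_le_mul_of_nonneg_left ?_ (norm_nonneg _)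
        exact (Matrix.l2_opNorm_def M ▸
          ((Matrix.toEuclideanLin.trans LinearMap.toContinuousLinearMap M).le_opNorm y))
    _ = ‖M‖ * ‖x‖ * ‖y‖ := by ring

lemma entry_eq_inner {n : ℕ} (M : Matrix (Fin n) (Fin n) ℝ) (i : Fin n) :
    (inner ℝ (EuclideanSpace.single i (1:ℝ))
      (Matrix.toEuclideanLin M (EuclideanSpace.single i 1)) : ℝ) = M i i := by
  simp [Matrix.toEuclideanLin_apply, EuclideanSpace.inner_single_left, Matrix.mulVec_single]

lemma abs_entry_le_norm {n : ℕ} (M : Matrix (Fin n) (Fin n) ℝ) (i : Fin n) :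
    |M i i| ≤ ‖M‖ := by
  have := quadform_abs_le M (EuclideanSpace.single i (1:ℝ)) (EuclideanSpace.single i (1:ℝ))
  rw [entry_eq_inner] at this
  simpa [EuclideanSpace.norm_single] using this

lemma abs_sqrt_sub_one_le (x : ℝ) (hx : 0 ≤ x) : |Real.sqrt x - 1| ≤ |x - 1| := by
  have h1 : Real.sqrt x ^ 2 = x := Real.sq_sqrt hx
  have h2 : 0 ≤ Real.sqrt x := Real.sqrt_nonneg x
  cases abs_cases (Real.sqrt x - 1) with
  | inl h => cases abs_cases (x-1) with
    | inl h' => nlinarith [h.1, h'.1]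
    | inr h' => nlinarith
  | inr h => cases abs_cases (x-1) with
    | inl h' => nlinarith
    | inr h' => nlinarith

lemma norm_diagonal_le {n : ℕ} (v : Fin n → ℝ) (c : ℝ) (hc : 0 ≤ c) (h : ∀ i, |v i| ≤ c) :
    ‖Matrix.diagonal v‖ ≤ c := by
  rw [Matrix.l2_opNorm_def]
  refine ContinuousLinearMap.opNorm_le_bound _ hc (fun x => ?_)
  have hx : ∀ (z : EuclideanSpace ℝ (Fin n)), ‖z‖ = Real.sqrt (∑ i, (z i)^2) := by
    intro z
    rw [EuclideanSpace.norm_eq]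
    apply congrArg; apply Finset.sum_congr rfl; intro i _; rw [Real.norm_eq_abs, sq_abs]
  have happ : ∀ i, (Matrix.toEuclideanLin (Matrix.diagonal v) x) i = v i * x i := by
    intro i
    simp [Matrix.toEuclideanLin_apply, Matrix.mulVec_diagonal]
  have hrw : ‖((Matrix.toEuclideanLin.trans LinearMap.toContinuousLinearMap)
      (Matrix.diagonal v)) x‖ = ‖Matrix.toEuclideanLin (Matrix.diagonal v) x‖ := rfl
  rw [hrw, hx, hx]
  rw [← Real.sqrt_sq hc, ← Real.sqrt_mul (by positivity)]
  apply Real.sqrt_le_sqrt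
  rw [Finset.mul_sum]
  apply Finset.sum_le_sum
  intro i _
  rw [happ i, mul_pow]
  have : (v i)^2 ≤ c^2 := by
    rw [← sq_abs]; exact pow_le_pow_left₀ (abs_nonneg _) (h i) 2
  nlinarith [sq_nonneg (x i)]

section Spectral
variable {n : ℕ} {B : Matrix (Fin n) (Fin n) ℝ} (hB : B.IsHermitian)

lemma coef_zero (J : Finset (Fin n)) (y : EuclideanSpace ℝ (Fin n))
    (hy : y ∈ Submodule.span ℝ (hB.eigenvectorBasis '' (J : Set (Fin n))))
    (i : Fin n) (hi : i ∉ J) : (inner ℝ (hB.eigenvectorBasis i) y : ℝ) = 0 := by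
  induction hy using Submodule.span_induction with
  | mem z hz =>
      obtain ⟨j, hj, rfl⟩ := hz
      exact hB.eigenvectorBasis.orthonormal.2 (fun h => hi (h ▸ hj))
  | zero => simp
  | add z w _ _ hz hw => rw [inner_add_right, hz, hw, add_zero]
  | smul a z _ hz => rw [inner_smul_right, hz, mul_zero]

lemma quadform_eq (y : EuclideanSpace ℝ (Fin n)) :
    (inner ℝ y (Matrix.toEuclideanLin B y) : ℝ)
      = ∑ i, hB.eigenvalues i * (inner ℝ (hB.eigenvectorBasis i) y : ℝ)^2 := by
  have hsym : (Matrix.toEuclideanLin B).IsSymmetric :=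
    (Matrix.isHermitian_iff_isSymmetric).1 hB
  rw [← OrthonormalBasis.sum_inner_mul_inner hB.eigenvectorBasis]
  apply Finset.sum_congr rfl
  intro i _
  have hev : Matrix.toEuclideanLin B (hB.eigenvectorBasis i)
      = hB.eigenvalues i • hB.eigenvectorBasis i := by
    apply (WithLp.equiv 2 _).injective
    simp only [Matrix.toEuclideanLin_apply]
    exact hB.mulVec_eigenvectorBasis i
  rw [show (inner ℝ (hB.eigenvectorBasis i) (Matrix.toEuclideanLin B y) : ℝ)
      = inner ℝ (Matrix.toEuclideanLin B (hB.eigenvectorBasis i)) y from (hsym _ _).symm]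
  rw [hev, inner_smul_left]
  rw [real_inner_comm y]
  ring_nf
  simp [sq]

lemma normsq_eq (y : EuclideanSpace ℝ (Fin n)) :
    ‖y‖^2 = ∑ i, (inner ℝ (hB.eigenvectorBasis i) y : ℝ)^2 := by
  rw [← real_inner_self_eq_norm_sq, ← OrthonormalBasis.sum_inner_mul_inner hB.eigenvectorBasis]
  apply Finset.sum_congr rfl
  intro i _
  rw [real_inner_comm y, sq]

lemma quadform_le_of_mem (J : Finset (Fin n)) (c : ℝ) (hc : ∀ i ∈ J, hB.eigenvalues i ≤ c)
    (y : EuclideanSpace ℝ (Fin n))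
    (hy : y ∈ Submodule.span ℝ (hB.eigenvectorBasis '' (J : Set (Fin n)))) :
    (inner ℝ y (Matrix.toEuclideanLin B y) : ℝ) ≤ c * ‖y‖^2 := by
  rw [quadform_eq hB, normsq_eq hB, Finset.mul_sum]
  rw [← Finset.sum_subset (Finset.subset_univ J)
    (fun i _ hi => by rw [coef_zero hB J y hy i hi]; ring),
    ← Finset.sum_subset (Finset.subset_univ J)
    (fun i _ hi => by rw [coef_zero hB J y hy i hi]; ring)]
  exact Finset.sum_le_sum fun i hi =>
    mul_le_mul_of_nonneg_right (hc i hi) (sq_nonneg _)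

lemma quadform_ge_of_mem (J : Finset (Fin n)) (c : ℝ) (hc : ∀ i ∈ J, c ≤ hB.eigenvalues i)
    (y : EuclideanSpace ℝ (Fin n))
    (hy : y ∈ Submodule.span ℝ (hB.eigenvectorBasis '' (J : Set (Fin n)))) :
    c * ‖y‖^2 ≤ (inner ℝ y (Matrix.toEuclideanLin B y) : ℝ) := by
  rw [quadform_eq hB, normsq_eq hB, Finset.mul_sum]
  rw [← Finset.sum_subset (Finset.subset_univ J)
    (fun i _ hi => by rw [coef_zero hB J y hy i hi]; ring),
    ← Finset.sum_subset (Finset.subset_univ J)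
    (fun i _ hi => by rw [coef_zero hB J y hy i hi]; ring)]
  exact Finset.sum_le_sum fun i hi =>
    mul_le_mul_of_nonneg_right (hc i hi) (sq_nonneg _)

lemma finrank_span_eigen (J : Finset (Fin n)) :
    Module.finrank ℝ (Submodule.span ℝ (hB.eigenvectorBasis '' (J : Set (Fin n)))) = J.card := by
  have hli : LinearIndependent ℝ (fun i : {x // x ∈ J} => hB.eigenvectorBasis i) :=
    (hB.eigenvectorBasis.orthonormal.linearIndependent).comp _ Subtype.val_injective
  have himg : hB.eigenvectorBasis '' (J : Set (Fin n))
      = Set.range (fun i : {x // x ∈ J} => hB.eigenvectorBasis i) := by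
    ext z; simp [Set.mem_image, Set.mem_range]
  rw [himg, finrank_span_eq_card hli]
  simp [Fintype.card_coe]

end Spectral

lemma exists_mem_inf_ne_zero {n : ℕ} (S T : Submodule ℝ (EuclideanSpace ℝ (Fin n)))
    (h : n < Module.finrank ℝ S + Module.finrank ℝ T) :
    ∃ y : EuclideanSpace ℝ (Fin n), y ∈ S ∧ y ∈ T ∧ y ≠ 0 := by
  have hsum := Submodule.finrank_sup_add_finrank_inf_eq S T
  have hle : Module.finrank ℝ ↥(S ⊔ T) ≤ n := by
    simpa [finrank_euclideanSpace_fin] using Submodule.finrank_le (S ⊔ T)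
  have hpos : 0 < Module.finrank ℝ ↥(S ⊓ T) := by omega
  have : Nontrivial ↥(S ⊓ T) := Module.nontrivial_of_finrank_pos hpos
  obtain ⟨y, hy⟩ := exists_ne (0 : ↥(S ⊓ T))
  exact ⟨(y : EuclideanSpace ℝ (Fin n)), y.2.1, y.2.2, by simpa using hy⟩

lemma eigVals_eq {n : ℕ} {B : Matrix (Fin n) (Fin n) ℝ} (hB : B.IsHermitian) :
    eigVals B = hB.eigenvalues := dif_pos hB

/-- positivity of the k-th largest eigenvalue of a rank-k PSD matrix -/
lemma sval_pos {d k : ℕ} (hk : 0 < k) (hkd : k ≤ d) {A : Matrix (Fin d) (Fin d) ℝ}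
    (hA : A.PosSemidef) (hrank : A.rank = k) :
    0 < sval A ⟨k - 1, Nat.lt_of_lt_of_le (Nat.sub_lt hk Nat.one_pos) hkd⟩ := by
  have hH : A.IsHermitian := hA.1
  set σ := Tuple.sort (eigVals A) with hσ
  set g : Fin d → ℝ := eigVals A ∘ σ with hg
  have hmono : Monotone g := Tuple.monotone_sort (eigVals A)
  have hnn : ∀ i, 0 ≤ g i := by
    intro i
    simp only [hg, Function.comp_apply, eigVals_eq hH]
    exact hA.eigenvalues_nonneg _
  set a : Fin d := ⟨d - k, by omega⟩ with ha
  have hrev : (⟨k - 1, by omega⟩ : Fin d).rev = a := by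
    apply Fin.ext
    simp [Fin.rev, ha]
    omega
  have hsval : sval A ⟨k - 1, by omega⟩ = g a := congrArg g hrev
  rw [hsval]
  rcases lt_or_eq_of_le (hnn a) with h | h
  · exact h
  · exfalso
    -- all indices ≤ a have g = 0, so at most k-1 nonzero eigenvalues
    have hzero : ∀ i ≤ a, g i = 0 := fun i hi =>
      le_antisymm (h ▸ hmono hi) (hnn i)
    have hcard : Fintype.card {i // eigVals A i ≠ 0} = k := by
      rw [show Fintype.card {i // eigVals A i ≠ 0}
          = Fintype.card {i // hH.eigenvalues i ≠ 0} from by rw [eigVals_eq hH]]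
      rw [← hH.rank_eq_card_non_zero_eigs, hrank]
    have hcard2 : Fintype.card {i // g i ≠ 0} = k := by
      rw [← hcard]
      exact Fintype.card_congr (Equiv.subtypeEquiv σ (fun i => by simp [hg]))
    have hsub : Finset.univ.filter (fun i => g i ≠ 0) ⊆ Finset.Ioi a := by
      intro i hi
      simp only [Finset.mem_filter] at hi
      simp only [Finset.mem_Ioi]
      by_contra hlt
      exact hi.2 (hzero i (not_lt.1 hlt))
    have := Finset.card_le_card hsub
    rw [Fin.card_Ioi] at this
    rw [Fintype.card_subtype] at hcard2
    simp only [ha] at this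
    omega

/-- One-sided Weyl inequality, abstract version. -/
lemma weyl_aux {d : ℕ} {A Ahat : Matrix (Fin d) (Fin d) ℝ} (hA : A.IsHermitian)
    (hAhat : Ahat.IsHermitian) (σA σB : Equiv.Perm (Fin d))
    (hmA : Monotone (fun i => hA.eigenvalues (σA i)))
    (hmB : Monotone (fun i => hAhat.eigenvalues (σB i))) (a : Fin d) :
    hA.eigenvalues (σA a) - ‖Ahat - A‖ ≤ hAhat.eigenvalues (σB a) := by
  set JS : Finset (Fin d) := (Finset.Ici a).image σA with hJS
  set JT : Finset (Fin d) := (Finset.Iic a).image σB with hJT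
  have hcardS : JS.card = d - a := by
    rw [hJS, Finset.card_image_of_injective _ σA.injective, Fin.card_Ici]
  have hcardT : JT.card = a + 1 := by
    rw [hJT, Finset.card_image_of_injective _ σB.injective, Fin.card_Iic]
  set S := Submodule.span ℝ (hA.eigenvectorBasis '' (JS : Set (Fin d)))
  set T := Submodule.span ℝ (hAhat.eigenvectorBasis '' (JT : Set (Fin d)))
  obtain ⟨y, hyS, hyT, hy0⟩ := exists_mem_inf_ne_zero S T (by
    rw [finrank_span_eigen hA JS, finrank_span_eigen hAhat JT, hcardS, hcardT]
    have := a.2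
    omega)
  have hylow : hA.eigenvalues (σA a) * ‖y‖^2 ≤ (inner ℝ y (Matrix.toEuclideanLin A y) : ℝ) := by
    apply quadform_ge_of_mem hA JS _ _ y hyS
    intro i hi
    rw [hJS] at hi
    obtain ⟨j, hj, rfl⟩ := Finset.mem_image.1 hi
    rw [Finset.mem_Ici] at hj
    exact hmA hj
  have hyhigh : (inner ℝ y (Matrix.toEuclideanLin Ahat y) : ℝ)
      ≤ hAhat.eigenvalues (σB a) * ‖y‖^2 := by
    apply quadform_le_of_mem hAhat JT _ _ y hyT
    intro i hi
    rw [hJT] at hi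
    obtain ⟨j, hj, rfl⟩ := Finset.mem_image.1 hi
    rw [Finset.mem_Iic] at hj
    exact hmB hj
  have hdiff : (inner ℝ y (Matrix.toEuclideanLin Ahat y) : ℝ)
      ≥ (inner ℝ y (Matrix.toEuclideanLin A y) : ℝ) - ‖Ahat - A‖ * ‖y‖^2 := by
    have hq := quadform_abs_le (Ahat - A) y y
    have hsplit : (inner ℝ y (Matrix.toEuclideanLin (Ahat - A) y) : ℝ)
        = (inner ℝ y (Matrix.toEuclideanLin Ahat y) : ℝ)
          - (inner ℝ y (Matrix.toEuclideanLin A y) : ℝ) := by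
      rw [map_sub]
      simp [inner_sub_right]
    rw [hsplit] at hq
    have := abs_le.1 hq
    nlinarith [this.1, sq_nonneg ‖y‖]
  have hypos : (0:ℝ) < ‖y‖^2 := pow_pos (norm_pos_iff.mpr hy0) 2
  nlinarith [hylow, hyhigh, hdiff]

/-- One-sided Weyl inequality for the k-th largest eigenvalue. -/
lemma sval_ge_of_close {d k : ℕ} (hk : 0 < k) (hkd : k ≤ d)
    {A Ahat : Matrix (Fin d) (Fin d) ℝ} (hA : A.IsHermitian) (hAhat : Ahat.IsHermitian) :
    sval A ⟨k - 1, Nat.lt_of_lt_of_le (Nat.sub_lt hk Nat.one_pos) hkd⟩ - ‖Ahat - A‖ ≤ sval Ahat ⟨k - 1, Nat.lt_of_lt_of_le (Nat.sub_lt hk Nat.one_pos) hkd⟩ := by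
  set a : Fin d := ⟨d - k, by omega⟩ with ha
  have hrev : (⟨k - 1, by omega⟩ : Fin d).rev = a := by
    apply Fin.ext
    simp [Fin.rev, ha]
    omega
  have hEA : eigVals A = hA.eigenvalues := eigVals_eq hA
  have hEB : eigVals Ahat = hAhat.eigenvalues := eigVals_eq hAhat
  have hmA : Monotone (fun i => hA.eigenvalues (Tuple.sort (eigVals A) i)) := by
    rw [← hEA]; exact Tuple.monotone_sort (eigVals A)
  have hmB : Monotone (fun i => hAhat.eigenvalues (Tuple.sort (eigVals Ahat) i)) := by
    rw [← hEB]; exact Tuple.monotone_sort (eigVals Ahat)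
  have e1 : sval A ⟨k - 1, by omega⟩ = hA.eigenvalues (Tuple.sort (eigVals A) a) :=
    (congrArg (eigVals A ∘ Tuple.sort (eigVals A)) hrev).trans (congrFun hEA _)
  have e2 : sval Ahat ⟨k - 1, by omega⟩ = hAhat.eigenvalues (Tuple.sort (eigVals Ahat) a) :=
    (congrArg (eigVals Ahat ∘ Tuple.sort (eigVals Ahat)) hrev).trans (congrFun hEB _)
  rw [e1, e2]
  exact weyl_aux hA hAhat (Tuple.sort (eigVals A)) (Tuple.sort (eigVals Ahat)) hmA hmB a

end WhiteningAux

open WhiteningAux in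
/-- Under the hypotheses of the whitening perturbation lemma
(`ε̃ := ‖Â − A‖_op/σ_k(A) < 1/3`, `Ŵ` whitens `Â`, `W = Ŵ U D^{−1/2} U^T` whitens `A`),
the whitening matrices satisfy `‖Ŵ − W‖_op ≤ ‖W‖_op · ε̃/(1 − ε̃)`. -/
theorem whitening_matrix_perturbation {d k : ℕ} (hk : 0 < k) (hkd : k ≤ d)
    (A Ahat : Matrix (Fin d) (Fin d) ℝ) (What : Matrix (Fin d) (Fin k) ℝ)
    (U : Matrix (Fin k) (Fin k) ℝ) (dvec : Fin k → ℝ)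
    (hA : A.PosSemidef) (hrank : A.rank = k) (hAhat : Ahat.PosSemidef)
    (σk εt : ℝ)
    (hσk : σk = sval A ⟨k - 1, by omega⟩)
    (hεt : εt = opNorm (Ahat - A) / σk)
    (hεlt : εt < 1 / 3)
    (hwhiten : Whatᵀ * Ahat * What = 1)
    (hWnorm : opNorm What = (Real.sqrt (sval Ahat ⟨k - 1, by omega⟩))⁻¹)
    (hU : Uᵀ * U = 1)
    (hdecomp : Whatᵀ * A * What = U * Matrix.diagonal dvec * Uᵀ)
    (W : Matrix (Fin d) (Fin k) ℝ)
    (hW : W = What * U * Matrix.diagonal (fun i => (Real.sqrt (dvec i))⁻¹) * Uᵀ) :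
    opNorm (What - W) ≤ opNorm W * (εt / (1 - εt)) := by
  have hkNe : Nonempty (Fin k) := ⟨⟨0, hk⟩⟩
  -- basic positivity
  have hσpos : 0 < σk := hσk ▸ sval_pos hk hkd hA hrank
  have hΔ : opNorm (Ahat - A) = εt * σk := by
    rw [hεt]; field_simp
  have hεnn : 0 ≤ εt := by
    rw [hεt]
    apply div_nonneg _ hσpos.le
    rw [opNorm_eq_l2]; exact norm_nonneg _
  have h1ε : 0 < 1 - εt := by linarith
  -- Weyl: sval Ahat ≥ (1 - εt) σk
  have hweyl : (1 - εt) * σk ≤ sval Ahat ⟨k - 1, by omega⟩ := by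
    have := sval_ge_of_close hk hkd hA.1 hAhat.1
    rw [← hσk] at this
    rw [← opNorm_eq_l2, hΔ] at this
    linarith
  have hσhatpos : 0 < sval Ahat ⟨k - 1, by omega⟩ :=
    lt_of_lt_of_le (by positivity) hweyl
  set σh := sval Ahat ⟨k - 1, by omega⟩ with hσh
  -- ‖What‖² = σh⁻¹
  have hWhat2 : ‖What‖ * ‖What‖ = σh⁻¹ := by
    rw [← opNorm_eq_l2, hWnorm, ← Real.sqrt_inv]
    exact Real.mul_self_sqrt (by positivity)
  -- key entry bound: |dvec i - 1| ≤ εt/(1-εt)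
  set ε' := εt / (1 - εt) with hε'
  have hε'nn : 0 ≤ ε' := div_nonneg hεnn h1ε.le
  have hε'lt : ε' < 1/2 := by
    rw [hε', div_lt_iff₀ h1ε]; linarith
  have hDmI : Matrix.diagonal dvec - 1 = Uᵀ * (Whatᵀ * (A - Ahat) * What) * U := by
    have h1 : Whatᵀ * (A - Ahat) * What
        = U * Matrix.diagonal dvec * Uᵀ - 1 := by
      rw [Matrix.mul_sub, Matrix.sub_mul, hdecomp, hwhiten]
    have h2 : Uᵀ * (U * Matrix.diagonal dvec * Uᵀ - 1) * U = Matrix.diagonal dvec - 1 := by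
      rw [Matrix.mul_sub, Matrix.sub_mul, Matrix.mul_one, hU]
      congr 1
      calc Uᵀ * (U * Matrix.diagonal dvec * Uᵀ) * U
          = (Uᵀ * U) * Matrix.diagonal dvec * (Uᵀ * U) := by
            simp only [Matrix.mul_assoc]
        _ = Matrix.diagonal dvec := by rw [hU]; simp
    rw [h1]
    exact h2.symm
  have hentry : ∀ i, |dvec i - 1| ≤ ε' := by
    intro i
    have h1 : |((Matrix.diagonal dvec - 1) : Matrix (Fin k) (Fin k) ℝ) i i| = |dvec i - 1| := by
      simp [Matrix.diagonal_apply_eq, Matrix.one_apply_eq]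
    have h2 := abs_entry_le_norm ((Matrix.diagonal dvec - 1) : Matrix (Fin k) (Fin k) ℝ) i
    rw [h1] at h2
    have h3 : ‖(Matrix.diagonal dvec - 1 : Matrix (Fin k) (Fin k) ℝ)‖
        ≤ ‖What‖ * ‖What‖ * ‖A - Ahat‖ := by
      rw [hDmI]
      calc ‖Uᵀ * (Whatᵀ * (A - Ahat) * What) * U‖
          ≤ ‖Uᵀ * (Whatᵀ * (A - Ahat) * What)‖ * ‖U‖ := Matrix.l2_opNorm_mul _ _
        _ ≤ ‖Uᵀ‖ * ‖Whatᵀ * (A - Ahat) * What‖ * ‖U‖ := by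
            apply mul_le_mul_of_nonneg_right (Matrix.l2_opNorm_mul _ _) (norm_nonneg _)
        _ ≤ 1 * ‖Whatᵀ * (A - Ahat) * What‖ * 1 := by
            apply mul_le_mul
            · exact mul_le_mul_of_nonneg_right
                (normT_le_one_of_orthogonal U hU) (norm_nonneg _)
            · exact norm_le_one_of_orthogonal U hU
            · exact norm_nonneg _
            · positivity
        _ = ‖Whatᵀ * (A - Ahat) * What‖ := by ring
        _ ≤ ‖Whatᵀ * (A - Ahat)‖ * ‖What‖ := Matrix.l2_opNorm_mul _ _
        _ ≤ ‖Whatᵀ‖ * ‖A - Ahat‖ * ‖What‖ := by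
            apply mul_le_mul_of_nonneg_right (Matrix.l2_opNorm_mul _ _) (norm_nonneg _)
        _ = ‖What‖ * ‖What‖ * ‖A - Ahat‖ := by rw [normT]; ring
    have h4 : ‖A - Ahat‖ = εt * σk := by
      rw [← hΔ, opNorm_eq_l2, ← norm_neg]
      congr 1
      abel
    have h5 : ‖What‖ * ‖What‖ * ‖A - Ahat‖ ≤ ε' := by
      rw [hWhat2, h4, hε', le_div_iff₀ h1ε]
      calc σh⁻¹ * (εt * σk) * (1 - εt) = (εt * σh⁻¹) * ((1 - εt) * σk) := by ring
        _ ≤ (εt * σh⁻¹) * σh :=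
            mul_le_mul_of_nonneg_left hweyl (by positivity)
        _ = εt := by field_simp
    linarith [le_trans h2 h3]
  -- positivity of dvec
  have hdpos : ∀ i, 0 < dvec i := by
    intro i
    have := abs_le.1 (hentry i)
    linarith [this.1, hε'lt]
  -- matrix identity: What - W = W * (U * diagonal (√dvec - 1) * Uᵀ)
  have hUUT : U * Uᵀ = 1 := mul_eq_one_comm.1 hU
  have hkey : What - W = W * (U * Matrix.diagonal (fun i => Real.sqrt (dvec i) - 1) * Uᵀ) := by
    rw [hW]
    have hstep : What * U * Matrix.diagonal (fun i => (Real.sqrt (dvec i))⁻¹) * Uᵀ *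
        (U * Matrix.diagonal (fun i => Real.sqrt (dvec i) - 1) * Uᵀ)
        = What * U * Matrix.diagonal
            (fun i => (Real.sqrt (dvec i))⁻¹ * (Real.sqrt (dvec i) - 1)) * Uᵀ := by
      calc What * U * Matrix.diagonal (fun i => (Real.sqrt (dvec i))⁻¹) * Uᵀ *
          (U * Matrix.diagonal (fun i => Real.sqrt (dvec i) - 1) * Uᵀ)
          = What * U * Matrix.diagonal (fun i => (Real.sqrt (dvec i))⁻¹) * (Uᵀ * U) *
            Matrix.diagonal (fun i => Real.sqrt (dvec i) - 1) * Uᵀ := by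
            simp only [Matrix.mul_assoc]
        _ = What * U * (Matrix.diagonal (fun i => (Real.sqrt (dvec i))⁻¹) *
            Matrix.diagonal (fun i => Real.sqrt (dvec i) - 1)) * Uᵀ := by
            rw [hU]; simp only [Matrix.mul_one, Matrix.mul_assoc]
        _ = What * U * Matrix.diagonal
            (fun i => (Real.sqrt (dvec i))⁻¹ * (Real.sqrt (dvec i) - 1)) * Uᵀ := by
            rw [Matrix.diagonal_mul_diagonal]
    rw [hstep]
    have hfun : (fun i => (Real.sqrt (dvec i))⁻¹ * (Real.sqrt (dvec i) - 1))
        = fun i => 1 - (Real.sqrt (dvec i))⁻¹ := by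
      funext i
      have hs : Real.sqrt (dvec i) ≠ 0 := ne_of_gt (Real.sqrt_pos.2 (hdpos i))
      field_simp
    rw [hfun]
    have hdiag : Matrix.diagonal (fun i => 1 - (Real.sqrt (dvec i))⁻¹)
        = 1 - Matrix.diagonal (fun i => (Real.sqrt (dvec i))⁻¹) := by
      rw [← Matrix.diagonal_one, ← Matrix.diagonal_sub]
    rw [hdiag, Matrix.mul_sub, Matrix.sub_mul, Matrix.mul_one]
    rw [show What * U * Uᵀ = What * (U * Uᵀ) from by simp only [Matrix.mul_assoc], hUUT,
      Matrix.mul_one]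
  -- final norm bound
  rw [opNorm_eq_l2, opNorm_eq_l2, hkey]
  have hdiagnorm : ‖Matrix.diagonal (fun i => Real.sqrt (dvec i) - 1)‖ ≤ ε' := by
    apply norm_diagonal_le _ _ hε'nn
    intro i
    exact le_trans (abs_sqrt_sub_one_le (dvec i) (hdpos i).le) (hentry i)
  calc ‖W * (U * Matrix.diagonal (fun i => Real.sqrt (dvec i) - 1) * Uᵀ)‖
      ≤ ‖W‖ * ‖U * Matrix.diagonal (fun i => Real.sqrt (dvec i) - 1) * Uᵀ‖ :=
        Matrix.l2_opNorm_mul _ _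
    _ ≤ ‖W‖ * ε' := by
        apply mul_le_mul_of_nonneg_left _ (norm_nonneg _)
        calc ‖U * Matrix.diagonal (fun i => Real.sqrt (dvec i) - 1) * Uᵀ‖
            ≤ ‖U * Matrix.diagonal (fun i => Real.sqrt (dvec i) - 1)‖ * ‖Uᵀ‖ :=
              Matrix.l2_opNorm_mul _ _
          _ ≤ ‖U‖ * ‖Matrix.diagonal (fun i => Real.sqrt (dvec i) - 1)‖ * ‖Uᵀ‖ := by
              apply mul_le_mul_of_nonneg_right (Matrix.l2_opNorm_mul _ _) (norm_nonneg _)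
          _ ≤ 1 * ε' * 1 := by
              apply mul_le_mul
              · exact mul_le_mul (norm_le_one_of_orthogonal U hU) hdiagnorm
                  (norm_nonneg _) zero_le_one
              · exact normT_le_one_of_orthogonal U hU
              · exact norm_nonneg _
              · positivity
          _ = ε' := by ring
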